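/- Let F = {f_λ | λ ∈ Λ} be an expansive IFS of homeomorphisms on a compact metric space with the limit (respectively Lipschitz) shadowing property. Then the inverse IFS F⁻¹ = {f_λ^{-1} | λ ∈ Λ} also has the limit (respectively Lipschitz) shadowing property. -/
import Mathlib


open Metric Filter Topology

noncomputable section

/-- Forward composition along a symbol sequence: `F_{σ_n} = f_{λ_{n-1}} ∘ ⋯ ∘ f_{λ_0}`. -/
def fwdComp {X Λ : Type*} [TopologicalSpace X] (f : Λ → X ≃ₜ X) (σ : ℤ → Λ) : ℕ → X → X
  | 0 => id
  | n + 1 => (f (σ (n : ℤ))) ∘ fwdComp f σ n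

/-- Backward composition: `F_{σ_{-n}} = f_{λ_{-n}}⁻¹ ∘ ⋯ ∘ f_{λ_{-1}}⁻¹`. -/
def bwdComp {X Λ : Type*} [TopologicalSpace X] (f : Λ → X ≃ₜ X) (σ : ℤ → Λ) : ℕ → X → X
  | 0 => id
  | n + 1 => ((f (σ (-(n + 1 : ℕ) : ℤ))).symm : X → X) ∘ bwdComp f σ n

/-- `IFSComp f σ i = F_{σ_i}`. -/
def IFSComp {X Λ : Type*} [TopologicalSpace X] (f : Λ → X ≃ₜ X) (σ : ℤ → Λ) (i : ℤ) : X → X :=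
  if 0 ≤ i then fwdComp f σ i.toNat else bwdComp f σ (-i).toNat

/-- A two-sided δ-pseudo orbit along σ. -/
def IsPseudoOrbit {X Λ : Type*} [MetricSpace X] (f : Λ → X ≃ₜ X) (δ : ℝ) (x : ℤ → X)
    (σ : ℤ → Λ) : Prop :=
  ∀ i : ℤ, dist (f (σ i) (x i)) (x (i + 1)) < δ

/-- Expansivity with constant `e`. -/
def ExpansiveWith {X Λ : Type*} [MetricSpace X] (f : Λ → X ≃ₜ X) (e : ℝ) : Prop :=
  ∀ (σ : ℤ → Λ) (x y : X), (∀ i : ℤ, dist (IFSComp f σ i x) (IFSComp f σ i y) < e) → x = y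

/-- Strong expansivity with constant `e`. -/
def StronglyExpansiveWith {X Λ : Type*} [MetricSpace X] (f : Λ → X ≃ₜ X) (e : ℝ) : Prop :=
  ∀ (σ μ : ℤ → Λ) (x y : X), (∀ i : ℤ, dist (IFSComp f σ i x) (IFSComp f μ i y) < e) → x = y

/-- The shadowing property. -/
def HasShadowing {X Λ : Type*} [MetricSpace X] (f : Λ → X ≃ₜ X) : Prop :=
  ∀ ε > (0 : ℝ), ∃ δ > (0 : ℝ), ∀ (x : ℤ → X) (σ : ℤ → Λ), IsPseudoOrbit f δ x σ →
    ∃ (y : X) (τ : ℤ → Λ), ∀ i : ℤ, dist (IFSComp f τ i y) (x i) ≤ ε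

/-- The Lipschitz shadowing property. -/
def HasLipschitzShadowing {X Λ : Type*} [MetricSpace X] (f : Λ → X ≃ₜ X) : Prop :=
  ∃ L > (0 : ℝ), ∃ ε₀ > (0 : ℝ), ∀ ε : ℝ, 0 < ε → ε < ε₀ →
    ∀ (x : ℤ → X) (σ : ℤ → Λ), IsPseudoOrbit f ε x σ →
      ∃ (y : X) (τ : ℤ → Λ), ∀ i : ℤ, dist (IFSComp f τ i y) (x i) < L * ε

/-- The limit shadowing property with respect to a distance function `D`. -/
def HasLimitShadowingWith {X Λ : Type*} [TopologicalSpace X] (f : Λ → X ≃ₜ X)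
    (D : X → X → ℝ) : Prop :=
  ∀ (x : ℤ → X) (σ : ℤ → Λ),
    Tendsto (fun i : ℤ => D (f (σ i) (x i)) (x (i + 1))) atTop (nhds 0) →
    Tendsto (fun i : ℤ => D (f (σ i) (x i)) (x (i + 1))) atBot (nhds 0) →
    ∃ (y : X) (τ : ℤ → Λ),
      Tendsto (fun i : ℤ => D (x i) (IFSComp f τ i y)) atTop (nhds 0) ∧
      Tendsto (fun i : ℤ => D (x i) (IFSComp f τ i y)) atBot (nhds 0)

/-- The metric `d̃` on sequences. -/
def dTilde {X : Type*} [MetricSpace X] (x y : ℤ → X) : ℝ :=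
  ⨆ i : ℤ, dist (x i) (y i) / 2 ^ i.natAbs

/-- The continuous shadowing property. -/
def HasContinuousShadowing {X Λ : Type*} [MetricSpace X] (f : Λ → X ≃ₜ X) : Prop :=
  ∀ ε > (0 : ℝ), ∃ δ > (0 : ℝ),
    ∃ r : {p : (ℤ → X) × (ℤ → Λ) // IsPseudoOrbit f δ p.1 p.2} → X,
      (∀ p, ∀ i : ℤ, dist (IFSComp f p.val.2 i (r p)) (p.val.1 i) < ε) ∧
      (∀ p, ∀ α > (0 : ℝ), ∃ β > (0 : ℝ), ∀ q, dTilde p.val.1 q.val.1 < β →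
        dist (r p) (r q) < α)


section myaux
variable {X Λ : Type*} [TopologicalSpace X] (f : Λ → X ≃ₜ X) (τ : ℤ → Λ)

lemma my_fwd_inv (n : ℕ) :
    fwdComp (fun l => (f l).symm) (fun j => τ (-j - 1)) n = bwdComp f τ n := by
  induction n with
  | zero => rfl
  | succ n ih =>
    have h : (-(n : ℤ) - 1) = (-((n + 1 : ℕ) : ℤ)) := by push_cast; ring
    simp only [fwdComp, bwdComp, ih, h]

lemma my_bwd_inv (n : ℕ) :
    bwdComp (fun l => (f l).symm) (fun j => τ (-j - 1)) n = fwdComp f τ n := by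
  induction n with
  | zero => rfl
  | succ n ih =>
    have h : (-(-((n + 1 : ℕ) : ℤ)) - 1) = (n : ℤ) := by push_cast; ring
    simp only [fwdComp, bwdComp, ih, h, Homeomorph.symm_symm]

lemma my_ifs_inv (i : ℤ) :
    IFSComp (fun l => (f l).symm) (fun j => τ (-j - 1)) i = IFSComp f τ (-i) := by
  unfold IFSComp
  rcases lt_trichotomy i 0 with h | h | h
  · rw [if_neg (not_le.mpr h), if_pos (by omega)]
    exact my_bwd_inv f τ _
  · subst h; simp [my_fwd_inv f τ, fwdComp, bwdComp]
  · rw [if_pos h.le, if_neg (by omega), neg_neg]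
    exact my_fwd_inv f τ _

end myaux

/-- For an expansive IFS of homeomorphisms, limit (resp. Lipschitz)
shadowing passes to the inverse IFS. -/
theorem stmt_14 {X Λ : Type*} [MetricSpace X] [CompactSpace X] [Finite Λ] [Nonempty Λ]
    (f : Λ → X ≃ₜ X) (hexp : ∃ e > (0 : ℝ), ExpansiveWith f e) :
    (HasLimitShadowingWith f dist →
      HasLimitShadowingWith (fun l : Λ => (f l).symm) dist) ∧
    (HasLipschitzShadowing f → HasLipschitzShadowing (fun l : Λ => (f l).symm)) := by
  clear hexp
  constructor
  · intro hf x σ hT hB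
    have hcompB : Tendsto (fun i : ℤ => -i - 2) atTop atBot := by
      simpa [sub_eq_add_neg] using
        tendsto_atBot_add_const_right atTop (-2 : ℤ) tendsto_neg_atTop_atBot
    have hcompT : Tendsto (fun i : ℤ => -i - 2) atBot atTop := by
      simpa [sub_eq_add_neg] using
        tendsto_atTop_add_const_right atBot (-2 : ℤ) tendsto_neg_atBot_atTop
    have eq1 : (fun i : ℤ =>
        dist (f (σ (-i - 1)) ((f (σ (-i - 1))).symm (x (-i - 1))))
             ((f (σ (-(i + 1) - 1))).symm (x (-(i + 1) - 1))))
        = (fun i : ℤ =>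
        dist ((fun l : Λ => (f l).symm) (σ (-i - 2)) (x (-i - 2))) (x (-i - 2 + 1))) := by
      funext i
      have e1 : -(i + 1) - 1 = -i - 2 := by ring
      have e2 : -i - 2 + 1 = -i - 1 := by ring
      rw [Homeomorph.apply_symm_apply, e1, e2]
      exact dist_comm _ _
    have hPT : Tendsto (fun i : ℤ =>
        dist (f (σ (-i - 1)) ((f (σ (-i - 1))).symm (x (-i - 1))))
             ((f (σ (-(i + 1) - 1))).symm (x (-(i + 1) - 1)))) atTop (nhds 0) := by
      rw [eq1]; exact hB.comp hcompB
    have hPB : Tendsto (fun i : ℤ =>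
        dist (f (σ (-i - 1)) ((f (σ (-i - 1))).symm (x (-i - 1))))
             ((f (σ (-(i + 1) - 1))).symm (x (-(i + 1) - 1)))) atBot (nhds 0) := by
      rw [eq1]; exact hT.comp hcompT
    obtain ⟨y, τ, hyT, hyB⟩ :=
      hf (fun i => (f (σ (-i - 1))).symm (x (-i - 1))) (fun i => σ (-i - 1)) hPT hPB
    refine ⟨y, fun j => τ (-j - 1), ?_, ?_⟩
    · simp only [my_ifs_inv f τ]
      apply squeeze_zero (g := fun j : ℤ =>
        dist ((f (σ (j - 1))).symm (x (j - 1))) (x (j - 1 + 1))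
          + dist ((f (σ (-(-j) - 1))).symm (x (-(-j) - 1))) (IFSComp f τ (-j) y))
      · intro t; exact dist_nonneg
      · intro j
        have e3 : -(-j) - 1 = j - 1 := by ring
        have e4 : j - 1 + 1 = j := by ring
        rw [e3, e4]
        exact dist_triangle_left _ _ _
      · have h1 : Tendsto (fun j : ℤ => j - 1) atTop atTop := by
          simpa [sub_eq_add_neg] using
            tendsto_atTop_add_const_right atTop (-1 : ℤ) tendsto_id
        have h2 : Tendsto (fun j : ℤ => -j) atTop atBot := tendsto_neg_atTop_atBot
        simpa using (hT.comp h1).add (hyB.comp h2)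
    · simp only [my_ifs_inv f τ]
      apply squeeze_zero (g := fun j : ℤ =>
        dist ((f (σ (j - 1))).symm (x (j - 1))) (x (j - 1 + 1))
          + dist ((f (σ (-(-j) - 1))).symm (x (-(-j) - 1))) (IFSComp f τ (-j) y))
      · intro t; exact dist_nonneg
      · intro j
        have e3 : -(-j) - 1 = j - 1 := by ring
        have e4 : j - 1 + 1 = j := by ring
        rw [e3, e4]
        exact dist_triangle_left _ _ _
      · have h1 : Tendsto (fun j : ℤ => j - 1) atBot atBot := by
          simpa [sub_eq_add_neg] using
            tendsto_atBot_add_const_right atBot (-1 : ℤ) tendsto_id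
        have h2 : Tendsto (fun j : ℤ => -j) atBot atTop := tendsto_neg_atBot_atTop
        simpa using (hB.comp h1).add (hyT.comp h2)
  · rintro ⟨L, hL, ε₀, hε₀, hsh⟩
    refine ⟨L + 1, by linarith, ε₀, hε₀, ?_⟩
    intro ε hε hεlt x σ hpo
    have hpo' : IsPseudoOrbit f ε (fun i => (f (σ (-i - 1))).symm (x (-i - 1)))
        (fun i => σ (-i - 1)) := by
      intro i
      show dist (f (σ (-i - 1)) ((f (σ (-i - 1))).symm (x (-i - 1))))
        ((f (σ (-(i + 1) - 1))).symm (x (-(i + 1) - 1))) < ε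
      have e1 : -(i + 1) - 1 = -i - 2 := by ring
      rw [Homeomorph.apply_symm_apply, e1, dist_comm]
      have h2 := hpo (-i - 2)
      have e2 : -i - 2 + 1 = -i - 1 := by ring
      rw [e2] at h2
      exact h2
    obtain ⟨y, τ, hy⟩ := hsh ε hε hεlt _ _ hpo'
    refine ⟨y, fun j => τ (-j - 1), ?_⟩
    intro j
    rw [my_ifs_inv f τ j]
    have h1 := hy (-j)
    have e3 : -(-j) - 1 = j - 1 := by ring
    rw [e3] at h1
    have h2 := hpo (j - 1)
    have e4 : j - 1 + 1 = j := by ring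
    rw [e4] at h2
    calc dist (IFSComp f τ (-j) y) (x j)
        ≤ dist (IFSComp f τ (-j) y) ((f (σ (j - 1))).symm (x (j - 1)))
          + dist ((f (σ (j - 1))).symm (x (j - 1))) (x j) := dist_triangle _ _ _
      _ < L * ε + ε := add_lt_add h1 h2
      _ = (L + 1) * ε := by ring
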